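/- arXiv:2509.13139 — 4 statements merged into one kernel-verified Lean document; each statement's English description precedes it below -/
import Mathlib

section
/- Let β₁ be the smallest eigenvalue of D^{−1/2} A D^{−1/2} and assume β₁ ≤ 0. For every α > 0, the smallest eigenvalue δ₁ of D̃_α^{−1/2} A D̃_α^{−1/2}, where D̃_α = D + αI, satisfies δ₁ ≥ (max_i d_i / (α + max_i d_i)) · β₁. -/
open Matrix

/-- quadratic form of a diagonally conjugated matrix -/
lemma diag_conj_quadform {n : ℕ} (A : Matrix (Fin n) (Fin n) ℝ) (f x : Fin n → ℝ) :
    x ⬝ᵥ (Matrix.diagonal f * A * Matrix.diagonal f) *ᵥ x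
      = (fun i => f i * x i) ⬝ᵥ A *ᵥ (fun i => f i * x i) := by
  rw [← Matrix.mulVec_mulVec, ← Matrix.mulVec_mulVec]
  have h1 : Matrix.diagonal f *ᵥ x = fun i => f i * x i := by
    ext i; simp [Matrix.mulVec_diagonal]
  rw [h1]
  simp only [dotProduct, Matrix.mulVec_diagonal]
  exact Finset.sum_congr rfl fun i _ => by ring

lemma herm_conj {n : ℕ} (A : Matrix (Fin n) (Fin n) ℝ) (hA : A.IsSymm) (f : Fin n → ℝ) :
    (Matrix.diagonal f * A * Matrix.diagonal f).IsHermitian := by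
  have hAH : A.IsHermitian := by
    rw [Matrix.IsHermitian, Matrix.conjTranspose]
    simpa [show (⇑(starRingEnd ℝ)) = id from funext fun x => by simp, Matrix.map_id] using hA.eq
  unfold Matrix.IsHermitian
  rw [Matrix.conjTranspose_mul, Matrix.conjTranspose_mul, Matrix.diagonal_conjTranspose, hAH]
  have : star f = f := by ext i; simp
  rw [this, Matrix.mul_assoc]

/-- lower bound of quadratic form via least element of spectrum -/
lemma quadform_lb {n : ℕ} (N : Matrix (Fin n) (Fin n) ℝ) (hN : N.IsHermitian)
    (β : ℝ) (hβ : ∀ μ ∈ spectrum ℝ N, β ≤ μ) (x : Fin n → ℝ) :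
    β * (x ⬝ᵥ x) ≤ x ⬝ᵥ N *ᵥ x := by
  have hBH : (N - β • 1).IsHermitian := hN.sub (by simp [Matrix.IsHermitian])
  have hpsd : (N - β • 1).PosSemidef := by
    apply hBH.posSemidef_iff_eigenvalues_nonneg.mpr
    intro i
    have hmem : hBH.eigenvalues i ∈ spectrum ℝ (N - β • 1) := hBH.eigenvalues_mem_spectrum_real i
    have hmem' : hBH.eigenvalues i + β ∈ spectrum ℝ N := by
      rw [spectrum.mem_iff] at hmem ⊢
      have heq : algebraMap ℝ (Matrix (Fin n) (Fin n) ℝ) (hBH.eigenvalues i + β) - N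
          = algebraMap ℝ (Matrix (Fin n) (Fin n) ℝ) (hBH.eigenvalues i) - (N - β • 1) := by
        rw [Algebra.algebraMap_eq_smul_one, Algebra.algebraMap_eq_smul_one]
        module
      rw [heq]
      exact hmem
    have := hβ _ hmem'
    exact (by linarith : (0:ℝ) ≤ hBH.eigenvalues i)
  have h2 := hpsd.dotProduct_mulVec_nonneg x
  have hst : star x = x := by ext i; simp
  rw [hst, Matrix.sub_mulVec, dotProduct_sub, Matrix.smul_mulVec,
    Matrix.one_mulVec, dotProduct_smul, sub_nonneg, smul_eq_mul] at h2
  exact h2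

/-- Let β₁ be the smallest eigenvalue of D^{−1/2} A D^{−1/2} and assume β₁ ≤ 0.
For every α > 0, the smallest eigenvalue δ₁ of D̃_α^{−1/2} A D̃_α^{−1/2}, where D̃_α = D + αI,
satisfies δ₁ ≥ (max_i d_i / (α + max_i d_i)) · β₁. -/
theorem stmt_0 (n : ℕ) (hn : 0 < n) (A : Matrix (Fin n) (Fin n) ℝ)
    (hA : A.IsSymm) (hdiag : ∀ i, A i i = 0)
    (h01 : ∀ i j, A i j = 0 ∨ A i j = 1)
    (d : Fin n → ℝ) (hd : ∀ i, d i = ∑ j, A i j) (hdpos : ∀ i, 0 < d i)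
    (dmax : ℝ) (hdmax : IsGreatest (Set.range d) dmax)
    (β₁ : ℝ)
    (hβ : IsLeast (spectrum ℝ
      (Matrix.diagonal (fun i => (Real.sqrt (d i))⁻¹) * A *
        Matrix.diagonal (fun i => (Real.sqrt (d i))⁻¹))) β₁)
    (hβ0 : β₁ ≤ 0)
    (α : ℝ) (hα : 0 < α)
    (δ₁ : ℝ)
    (hδ : IsLeast (spectrum ℝ
      (Matrix.diagonal (fun i => (Real.sqrt (d i + α))⁻¹) * A *
        Matrix.diagonal (fun i => (Real.sqrt (d i + α))⁻¹))) δ₁) :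
    dmax / (α + dmax) * β₁ ≤ δ₁ := by
  obtain ⟨i0, hi0⟩ := hdmax.1
  have hdmaxpos : 0 < dmax := hi0 ▸ hdpos i0
  have hadpos : 0 < α + dmax := by linarith
  set fδ : Fin n → ℝ := fun i => (Real.sqrt (d i + α))⁻¹ with hfδ
  set fβ : Fin n → ℝ := fun i => (Real.sqrt (d i))⁻¹ with hfβ
  set M := Matrix.diagonal fδ * A * Matrix.diagonal fδ with hM
  set N := Matrix.diagonal fβ * A * Matrix.diagonal fβ with hN
  have hMH : M.IsHermitian := herm_conj A hA fδ
  have hNH : N.IsHermitian := herm_conj A hA fβ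
  -- eigenvector for δ₁
  have hmem := hδ.1
  rw [spectrum.mem_iff] at hmem
  rw [Matrix.isUnit_iff_isUnit_det, isUnit_iff_ne_zero, not_ne_iff] at hmem
  obtain ⟨v, hv0, hv⟩ := (Matrix.exists_mulVec_eq_zero_iff).mpr hmem
  have hMv : M *ᵥ v = δ₁ • v := by
    have : (algebraMap ℝ (Matrix (Fin n) (Fin n) ℝ) δ₁ - M) *ᵥ v = 0 := hv
    rw [Matrix.sub_mulVec, sub_eq_zero, Algebra.algebraMap_eq_smul_one,
      Matrix.smul_mulVec, Matrix.one_mulVec] at this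
    exact this.symm
  -- quadratic forms
  set u : Fin n → ℝ := fun i => Real.sqrt (d i) * (fδ i * v i) with hu
  have key : v ⬝ᵥ M *ᵥ v = u ⬝ᵥ N *ᵥ u := by
    rw [hM, hN, diag_conj_quadform, diag_conj_quadform]
    have : (fun i => fβ i * u i) = fun i => fδ i * v i := by
      ext i
      have hne : Real.sqrt (d i) ≠ 0 := ne_of_gt (Real.sqrt_pos.mpr (hdpos i))
      rw [hu]
      show fβ i * (Real.sqrt (d i) * (fδ i * v i)) = fδ i * v i
      rw [hfβ, ← mul_assoc]
      simp [inv_mul_cancel₀ hne]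
    rw [this]
  have hlb : β₁ * (u ⬝ᵥ u) ≤ u ⬝ᵥ N *ᵥ u := quadform_lb N hNH β₁ (fun μ hμ => hβ.2 hμ) u
  -- norm bound : u ⬝ᵥ u ≤ dmax/(α+dmax) * (v ⬝ᵥ v)
  have hub : u ⬝ᵥ u ≤ dmax / (α + dmax) * (v ⬝ᵥ v) := by
    rw [dotProduct, dotProduct, Finset.mul_sum]
    apply Finset.sum_le_sum
    intro i _
    have hdi : 0 < d i := hdpos i
    have hdia : 0 < d i + α := by linarith
    have hui : u i * u i = d i / (d i + α) * (v i * v i) := by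
      rw [hu, hfδ]
      have h1 : Real.sqrt (d i) * Real.sqrt (d i) = d i := Real.mul_self_sqrt hdi.le
      have h2 : Real.sqrt (d i + α) * Real.sqrt (d i + α) = d i + α :=
        Real.mul_self_sqrt hdia.le
      have h3 : Real.sqrt (d i + α) ≠ 0 := ne_of_gt (Real.sqrt_pos.mpr hdia)
      field_simp
      ring_nf
      rw [Real.sq_sqrt hdi.le, Real.sq_sqrt hdia.le]; ring
    rw [hui]
    apply mul_le_mul_of_nonneg_right _ (mul_self_nonneg (v i))
    rw [div_le_div_iff₀ hdia hadpos]
    have hle : d i ≤ dmax := hdmax.2 ⟨i, rfl⟩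
    nlinarith
  have hvv : 0 < v ⬝ᵥ v := by
    have hnn : 0 ≤ v ⬝ᵥ v := Finset.sum_nonneg fun i _ => mul_self_nonneg (v i)
    rcases lt_or_eq_of_le hnn with h | h
    · exact h
    · exact absurd (dotProduct_self_eq_zero.mp h.symm) hv0
  have hqf : v ⬝ᵥ M *ᵥ v = δ₁ * (v ⬝ᵥ v) := by
    rw [hMv, dotProduct_smul, smul_eq_mul]
  have hchain : dmax / (α + dmax) * β₁ * (v ⬝ᵥ v) ≤ δ₁ * (v ⬝ᵥ v) := by
    have h1 : β₁ * (dmax / (α + dmax) * (v ⬝ᵥ v)) ≤ β₁ * (u ⬝ᵥ u) :=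
      mul_le_mul_of_nonpos_left hub hβ0
    calc dmax / (α + dmax) * β₁ * (v ⬝ᵥ v) = β₁ * (dmax / (α + dmax) * (v ⬝ᵥ v)) := by ring
    _ ≤ β₁ * (u ⬝ᵥ u) := h1
    _ ≤ u ⬝ᵥ N *ᵥ u := hlb
    _ = v ⬝ᵥ M *ᵥ v := key.symm
    _ = δ₁ * (v ⬝ᵥ v) := hqf
  exact le_of_mul_le_mul_right hchain hvv
end

section
/- Let β₁ be the smallest eigenvalue of D^{−1/2} A D^{−1/2} and assume β₁ ≤ 0. For every γ > 0, the smallest eigenvalue δ₁ of D̃_γ^{−1/2} A D̃_γ^{−1/2}, where D̃_γ = (1+γ)D + I, satisfies δ₁ ≥ (max_i d_i / (1 + (1+γ) max_i d_i)) · β₁. -/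
open Matrix Pointwise

lemma quad_diag {n : ℕ} (f : Fin n → ℝ) (A : Matrix (Fin n) (Fin n) ℝ) (x : Fin n → ℝ) :
    x ⬝ᵥ (diagonal f * A * diagonal f) *ᵥ x
      = (fun i => f i * x i) ⬝ᵥ A *ᵥ (fun i => f i * x i) := by
  have hM : ∀ i j, (diagonal f * A * diagonal f) i j = f i * A i j * f j := by
    intro i j; rw [Matrix.mul_diagonal, Matrix.diagonal_mul]
  simp only [dotProduct, mulVec, hM, Finset.mul_sum]
  refine Finset.sum_congr rfl fun i _ => Finset.sum_congr rfl fun j _ => by ring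

lemma herm_diag {n : ℕ} (f : Fin n → ℝ) (A : Matrix (Fin n) (Fin n) ℝ) (hA : A.IsSymm) :
    (diagonal f * A * diagonal f).IsHermitian := by
  unfold Matrix.IsHermitian
  rw [conjTranspose_eq_transpose_of_trivial, transpose_mul, transpose_mul,
    diagonal_transpose, hA.eq, ← Matrix.mul_assoc]

lemma rayleigh_lb {n : ℕ} (B : Matrix (Fin n) (Fin n) ℝ) (hB : B.IsHermitian) (β : ℝ)
    (hlb : ∀ μ ∈ spectrum ℝ B, β ≤ μ) (z : Fin n → ℝ) :
    β * (z ⬝ᵥ z) ≤ z ⬝ᵥ B *ᵥ z := by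
  set M : Matrix (Fin n) (Fin n) ℝ := B - β • 1 with hMdef
  have hM : M.IsHermitian := hB.sub (by simp [Matrix.IsHermitian])
  have hspec : spectrum ℝ M = spectrum ℝ B - ({β} : Set ℝ) := by
    rw [spectrum.sub_singleton_eq, hMdef, Algebra.algebraMap_eq_smul_one]
  have hpsd : M.PosSemidef := by
    refine hM.posSemidef_iff_eigenvalues_nonneg.mpr (fun i => ?_ : ∀ i, (0:ℝ) ≤ hM.eigenvalues i)
    have hmem : hM.eigenvalues i ∈ spectrum ℝ M := hM.eigenvalues_mem_spectrum_real i
    rw [hspec] at hmem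
    obtain ⟨s, hs, t, ht, hst⟩ := Set.mem_sub.mp hmem
    rw [Set.mem_singleton_iff] at ht
    have := hlb s hs
    linarith [hst ▸ (by linarith [hlb s hs] : (0:ℝ) ≤ s - t)]
  have h0 := hpsd.dotProduct_mulVec_nonneg z
  rw [star_trivial] at h0
  have hMv : M *ᵥ z = B *ᵥ z - β • z := by
    rw [hMdef, sub_mulVec, smul_mulVec, one_mulVec]
  rw [hMv, dotProduct_sub, dotProduct_smul] at h0
  have : β • (z ⬝ᵥ z) = β * (z ⬝ᵥ z) := rfl
  linarith [h0]


/-- Let β₁ be the smallest eigenvalue of D^{−1/2} A D^{−1/2} and assume β₁ ≤ 0.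
For every γ > 0, the smallest eigenvalue δ₁ of D̃_γ^{−1/2} A D̃_γ^{−1/2}, where
D̃_γ = (1+γ)D + I, satisfies δ₁ ≥ (max_i d_i / (1 + (1+γ) max_i d_i)) · β₁. -/
theorem stmt_2 (n : ℕ) (hn : 0 < n) (A : Matrix (Fin n) (Fin n) ℝ)
    (hA : A.IsSymm) (hdiag : ∀ i, A i i = 0)
    (h01 : ∀ i j, A i j = 0 ∨ A i j = 1)
    (d : Fin n → ℝ) (hd : ∀ i, d i = ∑ j, A i j) (hdpos : ∀ i, 0 < d i)
    (dmax : ℝ) (hdmax : IsGreatest (Set.range d) dmax)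
    (β₁ : ℝ)
    (hβ : IsLeast (spectrum ℝ
      (Matrix.diagonal (fun i => (Real.sqrt (d i))⁻¹) * A *
        Matrix.diagonal (fun i => (Real.sqrt (d i))⁻¹))) β₁)
    (hβ0 : β₁ ≤ 0)
    (γ : ℝ) (hγ : 0 < γ)
    (δ₁ : ℝ)
    (hδ : IsLeast (spectrum ℝ
      (Matrix.diagonal (fun i => (Real.sqrt ((1 + γ) * d i + 1))⁻¹) * A *
        Matrix.diagonal (fun i => (Real.sqrt ((1 + γ) * d i + 1))⁻¹))) δ₁) :
    dmax / (1 + (1 + γ) * dmax) * β₁ ≤ δ₁ := by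
  set f : Fin n → ℝ := fun i => (Real.sqrt ((1 + γ) * d i + 1))⁻¹ with hf
  set g : Fin n → ℝ := fun i => (Real.sqrt (d i))⁻¹ with hg
  set C : Matrix (Fin n) (Fin n) ℝ := diagonal f * A * diagonal f with hC
  set B : Matrix (Fin n) (Fin n) ℝ := diagonal g * A * diagonal g with hB
  obtain ⟨i₀, hi₀⟩ := hdmax.1
  have hdmaxpos : 0 < dmax := hi₀ ▸ hdpos i₀
  have hdenom : 0 < 1 + (1 + γ) * dmax := by nlinarith
  set c : ℝ := dmax / (1 + (1 + γ) * dmax) with hc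
  -- eigenvector of C for δ₁
  have hspecC : spectrum ℝ (Matrix.toLinAlgEquiv' C) = spectrum ℝ C :=
    AlgEquiv.spectrum_eq _ _
  have hev : Module.End.HasEigenvalue (Matrix.toLinAlgEquiv' C) δ₁ :=
    Module.End.hasEigenvalue_iff_mem_spectrum.mpr (hspecC ▸ hδ.1)
  obtain ⟨x, hx⟩ := hev.exists_hasEigenvector
  have hxeq : C *ᵥ x = δ₁ • x := by
    rw [← Matrix.toLinAlgEquiv'_apply]; exact hx.apply_eq_smul
  have hxpos : 0 < x ⬝ᵥ x := by
    have hnn : 0 ≤ x ⬝ᵥ x := Finset.sum_nonneg fun i _ => mul_self_nonneg (x i)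
    rcases lt_or_eq_of_le hnn with h | h
    · exact h
    · exact absurd (dotProduct_self_eq_zero.mp h.symm) hx.right
  have hCx : x ⬝ᵥ C *ᵥ x = δ₁ * (x ⬝ᵥ x) := by
    rw [hxeq, dotProduct_smul]; rfl
  set u : Fin n → ℝ := fun i => f i * x i with hu
  have hqC : x ⬝ᵥ C *ᵥ x = u ⬝ᵥ A *ᵥ u := quad_diag f A x
  set z : Fin n → ℝ := fun i => Real.sqrt (d i) * u i with hz
  have hgz : (fun i => g i * z i) = u := by
    funext i
    have hs : Real.sqrt (d i) ≠ 0 := ne_of_gt (Real.sqrt_pos.mpr (hdpos i))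
    simp only [hz, hg]
    rw [inv_mul_cancel_left₀ hs]
  have hqB : z ⬝ᵥ B *ᵥ z = u ⬝ᵥ A *ᵥ u := by
    rw [hB, quad_diag g A z, hgz]
  have hray : β₁ * (z ⬝ᵥ z) ≤ z ⬝ᵥ B *ᵥ z :=
    rayleigh_lb B (herm_diag g A hA) β₁ (fun μ hμ => hβ.2 hμ) z
  -- norm comparison
  have hzz : z ⬝ᵥ z ≤ c * (x ⬝ᵥ x) := by
    simp only [dotProduct, Finset.mul_sum]
    refine Finset.sum_le_sum fun i _ => ?_
    have hti : 0 < (1 + γ) * d i + 1 := by nlinarith [hdpos i]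
    have hfi : f i * f i = ((1 + γ) * d i + 1)⁻¹ := by
      rw [hf]
      rw [← mul_inv, Real.mul_self_sqrt (le_of_lt hti)]
    have hzi : z i * z i = (d i * ((1 + γ) * d i + 1)⁻¹) * (x i * x i) := by
      simp only [hz, hu]
      have : Real.sqrt (d i) * Real.sqrt (d i) = d i :=
        Real.mul_self_sqrt (le_of_lt (hdpos i))
      calc Real.sqrt (d i) * (f i * x i) * (Real.sqrt (d i) * (f i * x i))
          = (Real.sqrt (d i) * Real.sqrt (d i)) * (f i * f i) * (x i * x i) := by ring
        _ = (d i * ((1 + γ) * d i + 1)⁻¹) * (x i * x i) := by rw [this, hfi]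
    rw [hzi]
    have hdle : d i ≤ dmax := hdmax.2 ⟨i, rfl⟩
    have hcoef : d i * ((1 + γ) * d i + 1)⁻¹ ≤ c := by
      rw [hc, ← div_eq_mul_inv, div_le_div_iff₀ hti hdenom]
      nlinarith [hdpos i]
    exact mul_le_mul_of_nonneg_right hcoef (mul_self_nonneg (x i))
  have step1 : c * β₁ * (x ⬝ᵥ x) ≤ β₁ * (z ⬝ᵥ z) := by
    have := mul_le_mul_of_nonpos_left hzz hβ0
    linarith [this]
  have step2 : c * β₁ * (x ⬝ᵥ x) ≤ δ₁ * (x ⬝ᵥ x) := by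
    calc c * β₁ * (x ⬝ᵥ x) ≤ β₁ * (z ⬝ᵥ z) := step1
      _ ≤ z ⬝ᵥ B *ᵥ z := hray
      _ = u ⬝ᵥ A *ᵥ u := hqB
      _ = x ⬝ᵥ C *ᵥ x := hqC.symm
      _ = δ₁ * (x ⬝ᵥ x) := hCx
  exact le_of_mul_le_mul_right step2 hxpos
end

section
/- Let β₁ be the smallest eigenvalue of D^{−1/2} A D^{−1/2} and assume β₁ ≤ 0. For every α > 0, the largest eigenvalue λ_α^max of the symmetrically normalized Laplacian L̃_α = I − D̃_α^{−1/2} Ã_α D̃_α^{−1/2}, where Ã_α = A + αI and D̃_α = D + αI, satisfies λ_α^max ≤ max_i d_i · (1 − β₁) / (α + max_i d_i). -/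
open Pointwise


open Matrix in
lemma aux_rayleigh_lb {n : ℕ} (M : Matrix (Fin n) (Fin n) ℝ) (hM : M.IsHermitian) (c : ℝ)
    (hc : ∀ μ ∈ spectrum ℝ M, c ≤ μ) (x : Fin n → ℝ) :
    c * (x ⬝ᵥ x) ≤ x ⬝ᵥ M *ᵥ x := by
  have hM' : (M - c • 1).IsHermitian := by
    unfold Matrix.IsHermitian
    rw [conjTranspose_sub, hM.eq]
    congr 1
    simp [conjTranspose_smul]
  have heig : ∀ i, 0 ≤ hM'.eigenvalues i := by
    intro i
    have hmem : hM'.eigenvalues i ∈ spectrum ℝ (M - c • 1) :=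
      hM'.eigenvalues_mem_spectrum_real i
    have : spectrum ℝ (M - (algebraMap ℝ (Matrix (Fin n) (Fin n) ℝ)) c)
        = spectrum ℝ M - {c} := (spectrum.sub_singleton_eq M c).symm
    rw [show (algebraMap ℝ (Matrix (Fin n) (Fin n) ℝ)) c = c • 1 from
      Algebra.algebraMap_eq_smul_one c] at this
    rw [this] at hmem
    obtain ⟨ν, hν, b, hb, hnb⟩ := Set.mem_sub.mp hmem
    rw [Set.mem_singleton_iff] at hb
    subst hb
    have h2 := hc ν hν
    linarith
  have hpsd := hM'.posSemidef_iff_eigenvalues_nonneg.mpr heig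
  have h := hpsd.dotProduct_mulVec_nonneg x
  have hs : star x = x := by simp
  rw [hs, sub_mulVec, smul_mulVec, one_mulVec, dotProduct_sub, dotProduct_smul] at h
  simp only [smul_eq_mul] at h
  linarith

open Matrix in
lemma aux_eigvec {n : ℕ} (M : Matrix (Fin n) (Fin n) ℝ) (μ : ℝ) (hμ : μ ∈ spectrum ℝ M) :
    ∃ x : Fin n → ℝ, x ≠ 0 ∧ M *ᵥ x = μ • x := by
  have h1 : μ ∈ spectrum ℝ (Matrix.toLinAlgEquiv' M) := by
    rwa [AlgEquiv.spectrum_eq]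
  have h2 : Module.End.HasEigenvalue (Matrix.toLinAlgEquiv' M) μ :=
    Module.End.HasEigenvalue.of_mem_spectrum h1
  obtain ⟨v, hv⟩ := h2.exists_hasEigenvector
  refine ⟨v, hv.2, ?_⟩
  have := hv.apply_eq_smul
  simpa [Matrix.toLinAlgEquiv'_apply] using this


open Matrix


/-- Let β₁ be the smallest eigenvalue of D^{−1/2} A D^{−1/2} and assume β₁ ≤ 0.
For every α > 0, the largest eigenvalue λ_α^max of L̃_α = I − D̃_α^{−1/2} Ã_α D̃_α^{−1/2},
where Ã_α = A + αI and D̃_α = D + αI, satisfies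
λ_α^max ≤ max_i d_i · (1 − β₁) / (α + max_i d_i). -/
theorem stmt_3 (n : ℕ) (hn : 0 < n) (A : Matrix (Fin n) (Fin n) ℝ)
    (hA : A.IsSymm) (hdiag : ∀ i, A i i = 0)
    (h01 : ∀ i j, A i j = 0 ∨ A i j = 1)
    (d : Fin n → ℝ) (hd : ∀ i, d i = ∑ j, A i j) (hdpos : ∀ i, 0 < d i)
    (dmax : ℝ) (hdmax : IsGreatest (Set.range d) dmax)
    (β₁ : ℝ)
    (hβ : IsLeast (spectrum ℝ
      (Matrix.diagonal (fun i => (Real.sqrt (d i))⁻¹) * A *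
        Matrix.diagonal (fun i => (Real.sqrt (d i))⁻¹))) β₁)
    (hβ0 : β₁ ≤ 0)
    (α : ℝ) (hα : 0 < α)
    (lammax : ℝ)
    (hlam : IsGreatest (spectrum ℝ
      ((1 : Matrix (Fin n) (Fin n) ℝ) -
        Matrix.diagonal (fun i => (Real.sqrt (d i + α))⁻¹) *
          (A + α • (1 : Matrix (Fin n) (Fin n) ℝ)) *
        Matrix.diagonal (fun i => (Real.sqrt (d i + α))⁻¹))) lammax) :
    lammax ≤ dmax * (1 - β₁) / (α + dmax) := by
  obtain ⟨i₀, hi₀⟩ := hdmax.1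
  have hdmaxpos : 0 < dmax := hi₀ ▸ hdpos i₀
  have hαd : 0 < α + dmax := by linarith
  set C : ℝ := dmax * (1 - β₁) / (α + dmax) with hC
  set L : Matrix (Fin n) (Fin n) ℝ :=
    (1 : Matrix (Fin n) (Fin n) ℝ) -
      Matrix.diagonal (fun i => (Real.sqrt (d i + α))⁻¹) *
        (A + α • (1 : Matrix (Fin n) (Fin n) ℝ)) *
      Matrix.diagonal (fun i => (Real.sqrt (d i + α))⁻¹) with hL
  obtain ⟨x, hx0, hx⟩ := aux_eigvec L lammax hlam.1
  -- basic positivity facts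
  have hdα : ∀ i, (0:ℝ) < d i + α := fun i => by have := hdpos i; linarith
  set z : Fin n → ℝ := fun i => (Real.sqrt (d i + α))⁻¹ * x i with hz
  set y : Fin n → ℝ := fun i => Real.sqrt (d i) * z i with hy
  -- Rayleigh identity for lammax
  have hR : x ⬝ᵥ L *ᵥ x = lammax * (x ⬝ᵥ x) := by
    rw [hx, dotProduct_smul, smul_eq_mul]
  -- decompose the quadratic form
  have hDx : Matrix.diagonal (fun i => (Real.sqrt (d i + α))⁻¹) *ᵥ x = z := by
    ext i
    simp [hz, mulVec_diagonal]
  have hmv : L *ᵥ x = x - Matrix.diagonal (fun i => (Real.sqrt (d i + α))⁻¹) *ᵥ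
      ((A + α • (1 : Matrix (Fin n) (Fin n) ℝ)) *ᵥ z) := by
    rw [hL, sub_mulVec, one_mulVec, ← mulVec_mulVec, ← mulVec_mulVec, hDx]
  have hsplit : x ⬝ᵥ L *ᵥ x = x ⬝ᵥ x - (z ⬝ᵥ A *ᵥ z + α * (z ⬝ᵥ z)) := by
    rw [hmv, dotProduct_sub]
    congr 1
    have h1 : x ⬝ᵥ (Matrix.diagonal (fun i => (Real.sqrt (d i + α))⁻¹) *ᵥ
        ((A + α • (1 : Matrix (Fin n) (Fin n) ℝ)) *ᵥ z)) =
        z ⬝ᵥ ((A + α • (1 : Matrix (Fin n) (Fin n) ℝ)) *ᵥ z) := by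
      rw [dotProduct_mulVec]
      congr 1
      ext i
      simp [hz, vecMul_diagonal, mul_comm]
    rw [h1, add_mulVec, smul_mulVec, one_mulVec, dotProduct_add, dotProduct_smul,
      smul_eq_mul]
  -- lower bound for z ⬝ᵥ A *ᵥ z via β₁
  have hNsymm : (Matrix.diagonal (fun i => (Real.sqrt (d i))⁻¹) * A *
      Matrix.diagonal (fun i => (Real.sqrt (d i))⁻¹)).IsHermitian := by
    unfold Matrix.IsHermitian
    rw [conjTranspose_mul, conjTranspose_mul]
    have hAh : A.conjTranspose = A := by
      rw [conjTranspose_eq_transpose_of_trivial, hA.eq]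
    rw [hAh]
    simp [Matrix.mul_assoc, diagonal_conjTranspose]
  have hsne : ∀ i, Real.sqrt (d i) ≠ 0 := fun i => Real.sqrt_ne_zero'.mpr (hdpos i)
  have hyz : Matrix.diagonal (fun i => (Real.sqrt (d i))⁻¹) *ᵥ y = z := by
    ext i
    simp only [mulVec_diagonal, hy]
    rw [← mul_assoc, inv_mul_cancel₀ (hsne i), one_mul]
  have hNy : y ⬝ᵥ (Matrix.diagonal (fun i => (Real.sqrt (d i))⁻¹) * A *
      Matrix.diagonal (fun i => (Real.sqrt (d i))⁻¹)) *ᵥ y = z ⬝ᵥ A *ᵥ z := by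
    rw [← mulVec_mulVec, ← mulVec_mulVec, hyz, dotProduct_mulVec y]
    congr 1
    ext i
    simp only [vecMul_diagonal, hy]
    rw [mul_comm, ← mul_assoc, inv_mul_cancel₀ (hsne i), one_mul]
  have hlb : β₁ * (y ⬝ᵥ y) ≤ z ⬝ᵥ A *ᵥ z := by
    rw [← hNy]
    exact aux_rayleigh_lb _ hNsymm β₁ (fun μ hμ => hβ.2 hμ) y
  have hyy : y ⬝ᵥ y = ∑ i, d i * (z i)^2 := by
    simp only [dotProduct, hy]
    refine Finset.sum_congr rfl fun i _ => ?_
    have := Real.sq_sqrt (le_of_lt (hdpos i))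
    nlinarith [Real.sqrt_nonneg (d i)]
  -- combine
  have hmain : lammax * (x ⬝ᵥ x) ≤
      ∑ i, ((x i)^2 - α * (z i)^2 - β₁ * (d i * (z i)^2)) := by
    rw [← hR, hsplit]
    have : x ⬝ᵥ x = ∑ i, (x i)^2 := by
      simp [dotProduct, sq]
    rw [this]
    have hzz : z ⬝ᵥ z = ∑ i, (z i)^2 := by simp [dotProduct, sq]
    rw [hzz]
    have := hlb
    rw [hyy] at this
    rw [Finset.sum_sub_distrib, Finset.sum_sub_distrib, ← Finset.mul_sum, ← Finset.mul_sum]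
    linarith
  -- termwise bound
  have hterm : ∀ i, (x i)^2 - α * (z i)^2 - β₁ * (d i * (z i)^2) ≤ C * (x i)^2 := by
    intro i
    have hdi := hdpos i
    have hdiα := hdα i
    have hz2 : (z i)^2 = (x i)^2 / (d i + α) := by
      have h1 : ((Real.sqrt (d i + α))⁻¹)^2 = (d i + α)⁻¹ := by
        rw [← Real.sqrt_inv, Real.sq_sqrt (by positivity)]
      simp only [hz]
      rw [mul_pow, h1, div_eq_mul_inv, mul_comm]
    have hkey : d i * (1 - β₁) / (d i + α) ≤ C := by
      rw [hC, div_le_div_iff₀ hdiα hαd]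
      have hle : d i ≤ dmax := hdmax.2 ⟨i, rfl⟩
      nlinarith [mul_nonneg (mul_nonneg (by linarith : (0:ℝ) ≤ 1 - β₁) hα.le)
        (by linarith : (0:ℝ) ≤ dmax - d i)]
    have heq : (x i)^2 - α * ((x i)^2 / (d i + α)) - β₁ * (d i * ((x i)^2 / (d i + α)))
        = (d i * (1 - β₁) / (d i + α)) * (x i)^2 := by
      field_simp
      ring
    rw [hz2, heq]
    exact mul_le_mul_of_nonneg_right hkey (sq_nonneg _)
  have hxx : 0 < x ⬝ᵥ x := by
    have hnn : ∀ i ∈ Finset.univ, (0:ℝ) ≤ x i * x i := fun i _ => mul_self_nonneg _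
    obtain ⟨i, hi⟩ : ∃ i, x i ≠ 0 := by
      by_contra h
      push_neg at h
      exact hx0 (funext h)
    exact Finset.sum_pos' hnn ⟨i, Finset.mem_univ i, mul_self_pos.mpr hi⟩
  have hfin : lammax * (x ⬝ᵥ x) ≤ C * (x ⬝ᵥ x) := by
    calc lammax * (x ⬝ᵥ x) ≤ ∑ i, ((x i)^2 - α * (z i)^2 - β₁ * (d i * (z i)^2)) := hmain
    _ ≤ ∑ i, C * (x i)^2 := Finset.sum_le_sum fun i _ => hterm i
    _ = C * (x ⬝ᵥ x) := by rw [← Finset.mul_sum]; congr 1; simp [dotProduct, sq]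
  exact le_of_mul_le_mul_right hfin hxx
end

section
/- Let β₁ be the smallest eigenvalue of D^{−1/2} A D^{−1/2} and assume β₁ ≤ 0. For every γ > 0, the largest eigenvalue λ_γ^max of the symmetrically normalized Laplacian L̃_γ = I − D̃_γ^{−1/2} Ã_γ D̃_γ^{−1/2}, where Ã_γ = (γ+1)A + I and D̃_γ = (γ+1)D + I, satisfies λ_γ^max ≤ (1+γ) max_i d_i · (1 − β₁) / (1 + (1+γ) max_i d_i). -/
open Matrix
open scoped Pointwise

lemma quad_lower {n : ℕ} (M : Matrix (Fin n) (Fin n) ℝ) (hM : M.IsHermitian) (β : ℝ)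
    (hb : ∀ μ ∈ spectrum ℝ M, β ≤ μ) (x : Fin n → ℝ) :
    β * (x ⬝ᵥ x) ≤ x ⬝ᵥ M *ᵥ x := by
  set H : Matrix (Fin n) (Fin n) ℝ := M - algebraMap ℝ _ β with hHdef
  have hHh : H.IsHermitian := by
    refine hM.sub ?_
    rw [Matrix.algebraMap_eq_diagonal]
    exact Matrix.isHermitian_diagonal _
  have hpsd : H.PosSemidef := by
    refine hHh.posSemidef_iff_eigenvalues_nonneg.mpr fun i => ?_
    show 0 ≤ hHh.eigenvalues i
    have hmem := hHh.eigenvalues_mem_spectrum_real i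
    have hmem' : hHh.eigenvalues i ∈ spectrum ℝ M - ({β} : Set ℝ) := by
      rw [spectrum.sub_singleton_eq]; exact hmem
    obtain ⟨m, hm, t, ht, hmt⟩ := Set.mem_sub.mp hmem'
    rw [Set.mem_singleton_iff] at ht
    subst ht
    have := hb m hm
    linarith [hmt ▸ sub_nonneg.mpr this]
  have h0 := hpsd.dotProduct_mulVec_nonneg x
  have hstar : star x = x := funext fun i => star_trivial _
  rw [hstar] at h0
  have hmv : H *ᵥ x = M *ᵥ x - β • x := by
    rw [hHdef, Matrix.sub_mulVec, Matrix.algebraMap_eq_diagonal]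
    congr 1
    ext i
    simp [Matrix.mulVec_diagonal]
  rw [hmv, dotProduct_sub, dotProduct_smul, smul_eq_mul] at h0
  linarith

lemma exists_eigvec {n : ℕ} (M : Matrix (Fin n) (Fin n) ℝ) {μ : ℝ} (h : μ ∈ spectrum ℝ M) :
    ∃ v : Fin n → ℝ, v ≠ 0 ∧ M *ᵥ v = μ • v := by
  rw [← AlgEquiv.spectrum_eq (Matrix.toLinAlgEquiv' (R := ℝ) (n := Fin n))] at h
  obtain ⟨v, hv⟩ := (Module.End.hasEigenvalue_iff_mem_spectrum.mpr h).exists_hasEigenvector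
  refine ⟨v, hv.2, ?_⟩
  have := Module.End.mem_eigenspace_iff.mp hv.1
  rwa [Matrix.toLinAlgEquiv'_apply] at this

lemma dot_diag_conj {n : ℕ} (f : Fin n → ℝ) (M : Matrix (Fin n) (Fin n) ℝ) (v : Fin n → ℝ) :
    v ⬝ᵥ (Matrix.diagonal f * M * Matrix.diagonal f) *ᵥ v =
      (fun i => f i * v i) ⬝ᵥ M *ᵥ (fun i => f i * v i) := by
  rw [← Matrix.mulVec_mulVec, ← Matrix.mulVec_mulVec]
  have h1 : Matrix.diagonal f *ᵥ v = fun i => f i * v i := by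
    funext i; rw [Matrix.mulVec_diagonal]
  rw [h1]
  simp only [dotProduct, Matrix.mulVec_diagonal]
  exact Finset.sum_congr rfl fun i _ => by ring

/-- Let β₁ be the smallest eigenvalue of D^{−1/2} A D^{−1/2} and assume β₁ ≤ 0.
For every γ > 0, the largest eigenvalue λ_γ^max of L̃_γ = I − D̃_γ^{−1/2} Ã_γ D̃_γ^{−1/2},
where Ã_γ = (γ+1)A + I and D̃_γ = (γ+1)D + I, satisfies
λ_γ^max ≤ (1+γ) max_i d_i · (1 − β₁) / (1 + (1+γ) max_i d_i). -/
theorem stmt_4 (n : ℕ) (hn : 0 < n) (A : Matrix (Fin n) (Fin n) ℝ)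
    (hA : A.IsSymm) (hdiag : ∀ i, A i i = 0)
    (h01 : ∀ i j, A i j = 0 ∨ A i j = 1)
    (d : Fin n → ℝ) (hd : ∀ i, d i = ∑ j, A i j) (hdpos : ∀ i, 0 < d i)
    (dmax : ℝ) (hdmax : IsGreatest (Set.range d) dmax)
    (β₁ : ℝ)
    (hβ : IsLeast (spectrum ℝ
      (Matrix.diagonal (fun i => (Real.sqrt (d i))⁻¹) * A *
        Matrix.diagonal (fun i => (Real.sqrt (d i))⁻¹))) β₁)
    (hβ0 : β₁ ≤ 0)
    (γ : ℝ) (hγ : 0 < γ)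
    (lammax : ℝ)
    (hlam : IsGreatest (spectrum ℝ
      ((1 : Matrix (Fin n) (Fin n) ℝ) -
        Matrix.diagonal (fun i => (Real.sqrt ((γ + 1) * d i + 1))⁻¹) *
          ((γ + 1) • A + (1 : Matrix (Fin n) (Fin n) ℝ)) *
        Matrix.diagonal (fun i => (Real.sqrt ((γ + 1) * d i + 1))⁻¹))) lammax) :
    lammax ≤ (1 + γ) * dmax * (1 - β₁) / (1 + (1 + γ) * dmax) := by
  have hdmaxpos : 0 < dmax := by
    obtain ⟨i⟩ := Fin.pos_iff_nonempty.mp hn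
    exact lt_of_lt_of_le (hdpos i) (hdmax.2 ⟨i, rfl⟩)
  set g : ℝ := γ + 1 with hg
  have hgpos : (0:ℝ) < g := by linarith
  set s : Fin n → ℝ := fun i => g * d i + 1 with hs
  have hspos : ∀ i, 0 < s i := fun i => by
    have := hdpos i; have := mul_pos hgpos this; simp only [hs]; linarith
  set N := Matrix.diagonal (fun i => (Real.sqrt (d i))⁻¹) * A *
      Matrix.diagonal (fun i => (Real.sqrt (d i))⁻¹) with hN
  set L := (1 : Matrix (Fin n) (Fin n) ℝ) -
      Matrix.diagonal (fun i => (Real.sqrt (s i))⁻¹) *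
        (g • A + (1 : Matrix (Fin n) (Fin n) ℝ)) *
      Matrix.diagonal (fun i => (Real.sqrt (s i))⁻¹) with hL
  have hNh : N.IsHermitian := by
    rw [Matrix.IsHermitian]
    ext i j
    rw [Matrix.conjTranspose_apply, hN]
    rw [Matrix.mul_diagonal, Matrix.mul_diagonal, Matrix.diagonal_mul, Matrix.diagonal_mul]
    rw [star_trivial, hA.apply i j]
    ring
  obtain ⟨v, hv0, hveq⟩ := exists_eigvec _ hlam.1
  set c : ℝ := (1 + γ) * dmax * (1 - β₁) / (1 + (1 + γ) * dmax) with hc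
  have hden : (0:ℝ) < 1 + (1 + γ) * dmax := by nlinarith
  -- the vector w
  set w : Fin n → ℝ := fun i => (Real.sqrt (s i))⁻¹ * v i with hw
  set y : Fin n → ℝ := fun i => Real.sqrt (d i) * w i with hy
  have hsq : ∀ i, Real.sqrt (s i) * Real.sqrt (s i) = s i := fun i =>
    Real.mul_self_sqrt (hspos i).le
  have hsqd : ∀ i, Real.sqrt (d i) * Real.sqrt (d i) = d i := fun i =>
    Real.mul_self_sqrt (hdpos i).le
  -- quadratic form of L
  have hquadL : v ⬝ᵥ L *ᵥ v = v ⬝ᵥ v - g * (w ⬝ᵥ A *ᵥ w) - w ⬝ᵥ w := by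
    rw [hL, Matrix.sub_mulVec, Matrix.one_mulVec, dotProduct_sub]
    rw [dot_diag_conj]
    rw [Matrix.add_mulVec, Matrix.one_mulVec, dotProduct_add]
    rw [Matrix.smul_mulVec, dotProduct_smul, smul_eq_mul]
    ring
  -- relate w-quadratic form of A to N
  have hyN : y ⬝ᵥ N *ᵥ y = w ⬝ᵥ A *ᵥ w := by
    rw [hN, dot_diag_conj]
    have : (fun i => (Real.sqrt (d i))⁻¹ * y i) = w := by
      funext i
      have hne : Real.sqrt (d i) ≠ 0 := (Real.sqrt_pos.mpr (hdpos i)).ne'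
      simp only [hy]
      field_simp
    rw [this]
  have hwA : β₁ * (y ⬝ᵥ y) ≤ w ⬝ᵥ A *ᵥ w := by
    rw [← hyN]
    exact quad_lower N hNh β₁ (fun μ hμ => hβ.2 hμ) y
  -- eigen equation
  have hlamquad : v ⬝ᵥ L *ᵥ v = lammax * (v ⬝ᵥ v) := by
    rw [hveq, dotProduct_smul, smul_eq_mul]
  have hvvpos : 0 < v ⬝ᵥ v := by
    have h1 : v ⬝ᵥ v = ∑ i, v i * v i := rfl
    obtain ⟨i, hi⟩ : ∃ i, v i ≠ 0 := by
      by_contra h; push_neg at h; exact hv0 (funext h)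
    rw [h1]
    exact Finset.sum_pos' (fun j _ => mul_self_nonneg _)
      ⟨i, Finset.mem_univ i, mul_self_pos.mpr hi⟩
  have hyy : y ⬝ᵥ y = ∑ i, d i * (w i * w i) := by
    simp only [dotProduct, hy]
    refine Finset.sum_congr rfl fun i _ => ?_
    rw [show Real.sqrt (d i) * w i * (Real.sqrt (d i) * w i)
        = Real.sqrt (d i) * Real.sqrt (d i) * (w i * w i) by ring, hsqd]
  have h1β : (0:ℝ) ≤ 1 - β₁ := by linarith
  have key : ∀ i, v i * v i - g * β₁ * (d i * (w i * w i)) - w i * w i ≤ c * (v i * v i) := by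
    intro i
    have hsne : Real.sqrt (s i) ≠ 0 := (Real.sqrt_pos.mpr (hspos i)).ne'
    have hwi : w i * w i = v i * v i / s i := by
      simp only [hw]
      rw [show (Real.sqrt (s i))⁻¹ * v i * ((Real.sqrt (s i))⁻¹ * v i)
          = v i * v i / (Real.sqrt (s i) * Real.sqrt (s i)) by field_simp; try ring, hsq]
    rw [hwi]
    have ht : (0:ℝ) ≤ v i * v i := mul_self_nonneg _
    have hsne' : s i ≠ 0 := (hspos i).ne'
    have h1 : v i * v i - g * β₁ * (d i * (v i * v i / s i)) - v i * v i / s i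
        = v i * v i * (g * d i * (1 - β₁)) / s i := by
      field_simp
      ring
    rw [h1, hc, div_mul_eq_mul_div, div_le_div_iff₀ (hspos i) hden]
    have hdle : d i ≤ dmax := hdmax.2 ⟨i, rfl⟩
    have hkey : 0 ≤ v i * v i * (1 - β₁) * g * (dmax - d i) :=
      mul_nonneg (mul_nonneg (mul_nonneg ht h1β) hgpos.le) (sub_nonneg.mpr hdle)
    have hdip := hdpos i
    simp only [hs, hg]
    nlinarith [hkey, mul_pos hgpos hdip]
  have hsum : v ⬝ᵥ v - g * β₁ * (y ⬝ᵥ y) - w ⬝ᵥ w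
      = ∑ i, (v i * v i - g * β₁ * (d i * (w i * w i)) - w i * w i) := by
    rw [hyy]
    simp only [dotProduct]
    rw [Finset.mul_sum, ← Finset.sum_sub_distrib, ← Finset.sum_sub_distrib]
  have hstep : lammax * (v ⬝ᵥ v) ≤ c * (v ⬝ᵥ v) := by
    have h2 : g * (β₁ * (y ⬝ᵥ y)) ≤ g * (w ⬝ᵥ A *ᵥ w) :=
      mul_le_mul_of_nonneg_left hwA hgpos.le
    have h3 : v ⬝ᵥ L *ᵥ v ≤ v ⬝ᵥ v - g * β₁ * (y ⬝ᵥ y) - w ⬝ᵥ w := by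
      rw [hquadL]; nlinarith [h2]
    have h4 : ∑ i, (v i * v i - g * β₁ * (d i * (w i * w i)) - w i * w i)
        ≤ ∑ i, c * (v i * v i) :=
      Finset.sum_le_sum fun i _ => key i
    have h5 : ∑ i, c * (v i * v i) = c * (v ⬝ᵥ v) := by
      rw [dotProduct, Finset.mul_sum]
    calc lammax * (v ⬝ᵥ v) = v ⬝ᵥ L *ᵥ v := hlamquad.symm
      _ ≤ v ⬝ᵥ v - g * β₁ * (y ⬝ᵥ y) - w ⬝ᵥ w := h3
      _ = ∑ i, (v i * v i - g * β₁ * (d i * (w i * w i)) - w i * w i) := hsum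
      _ ≤ ∑ i, c * (v i * v i) := h4
      _ = c * (v ⬝ᵥ v) := h5
  exact (mul_le_mul_iff_of_pos_right hvvpos).mp hstep
end
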